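/- Let G be an abelian group, A a finite subset of G, δ ∈ (0, 1/2), and E ⊆ A × A with |E| ≥ (1 − δ²)|A|² and |{a + b : (a,b) ∈ E}| ≤ K|A|. Then there exists A′ ⊆ A with |A′| ≥ (1 − 2δ)|A| and |A′ − A′| ≤ (K²/(1 − 2δ))|A|. -/

import Mathlib

open Finset Pointwise

theorem stmt_9 {G : Type*} [AddCommGroup G] [DecidableEq G]
    (A : Finset G) (δ K : ℝ) (hδ : 0 < δ) (hδ' : δ < 1 / 2) (hK : 1 ≤ K)
    (E : Finset (G × G)) (hE : E ⊆ A ×ˢ A)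
    (hEcard : (1 - δ ^ 2) * (A.card : ℝ) ^ 2 ≤ (E.card : ℝ))
    (hsum : ((E.image fun ab => ab.1 + ab.2).card : ℝ) ≤ K * A.card) :
    ∃ A' ⊆ A, (1 - 2 * δ) * (A.card : ℝ) ≤ (A'.card : ℝ) ∧
      ((A' - A').card : ℝ) ≤ K ^ 2 / (1 - 2 * δ) * A.card := by
  classical
  set n : ℝ := (A.card : ℝ) with hn
  have hn0 : 0 ≤ n := by positivity
  -- neighborhoods
  set nbr : G → Finset G := fun a => A.filter (fun b => (a, b) ∈ E) with hnbr
  set A' : Finset G := A.filter (fun a => (1 - δ) * n ≤ ((nbr a).card : ℝ)) with hA'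
  have hA'sub : A' ⊆ A := filter_subset _ _
  have hEmem : ∀ p ∈ E, p.1 ∈ A ∧ p.2 ∈ A := by
    intro p hp
    have := hE hp
    simpa [Finset.mem_product] using this
  -- edge count as sum of degrees
  have hsumdeg : E.card = ∑ a ∈ A, (nbr a).card := by
    rw [Finset.card_eq_sum_card_fiberwise (f := Prod.fst) (fun p hp => (hEmem p hp).1)]
    refine Finset.sum_congr rfl fun a ha => ?_
    refine Finset.card_bij (fun p _ => p.2) ?_ ?_ ?_
    · intro p hp
      simp only [hnbr, Finset.mem_filter] at hp ⊢
      exact ⟨(hEmem p hp.1).2, by rw [← hp.2]; exact hp.1⟩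
    · intro p hp q hq h
      simp only [Finset.mem_filter] at hp hq
      exact Prod.ext (hp.2.trans hq.2.symm) h
    · intro b hb
      simp only [hnbr, Finset.mem_filter] at hb
      exact ⟨(a, b), by simp [hb.2], rfl⟩
  have hdegle : ∀ a ∈ A, ((nbr a).card : ℝ) ≤ n := by
    intro a _
    exact_mod_cast Nat.cast_le.mpr (Finset.card_le_card (Finset.filter_subset _ _))
  -- lower bound on |A'|
  have hA'card : (1 - 2 * δ) * n ≤ (A'.card : ℝ) := by
    have hsplit : ∑ a ∈ A, ((nbr a).card : ℝ)
        = ∑ a ∈ A', ((nbr a).card : ℝ)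
          + ∑ a ∈ A.filter (fun a => ¬ ((1 - δ) * n ≤ ((nbr a).card : ℝ))), ((nbr a).card : ℝ) := by
      rw [hA', Finset.sum_filter_add_sum_filter_not]
    have h1 : ∑ a ∈ A', ((nbr a).card : ℝ) ≤ (A'.card : ℝ) * n :=
      calc ∑ a ∈ A', ((nbr a).card : ℝ) ≤ ∑ _a ∈ A', n :=
            Finset.sum_le_sum fun a ha => hdegle a (hA'sub ha)
        _ = (A'.card : ℝ) * n := by rw [Finset.sum_const, nsmul_eq_mul]
    have h2 : ∑ a ∈ A.filter (fun a => ¬ ((1 - δ) * n ≤ ((nbr a).card : ℝ))), ((nbr a).card : ℝ)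
        ≤ ((A.filter (fun a => ¬ ((1 - δ) * n ≤ ((nbr a).card : ℝ)))).card : ℝ) * ((1 - δ) * n) := by
      rw [← nsmul_eq_mul]
      rw [← Finset.sum_const]
      exact Finset.sum_le_sum fun a ha => le_of_lt (by
        have := (Finset.mem_filter.mp ha).2
        exact lt_of_not_ge this)
    have hcards : ((A.filter (fun a => ¬ ((1 - δ) * n ≤ ((nbr a).card : ℝ)))).card : ℝ)
        = n - (A'.card : ℝ) := by
      have h3 := Finset.card_filter_add_card_filter_not
        (s := A) (p := fun a => (1 - δ) * n ≤ ((nbr a).card : ℝ))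
      rw [← hA'] at h3
      have h4 : (A'.card : ℝ)
          + ((A.filter (fun a => ¬ ((1 - δ) * n ≤ ((nbr a).card : ℝ)))).card : ℝ) = n := by
        rw [hn]; exact_mod_cast congrArg (Nat.cast : ℕ → ℝ) h3
      linarith
    have hEreal : (1 - δ ^ 2) * n ^ 2 ≤ ∑ a ∈ A, ((nbr a).card : ℝ) := by
      calc (1 - δ ^ 2) * n ^ 2 ≤ (E.card : ℝ) := hEcard
        _ = ∑ a ∈ A, ((nbr a).card : ℝ) := by rw [hsumdeg]; push_cast; rfl
    have hx : (0:ℝ) ≤ (A'.card : ℝ) := by positivity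
    rw [hcards] at h2
    have hstep : δ * ((1 - δ) * n * n - (A'.card : ℝ) * n) ≤ 0 := by nlinarith
    by_contra hcon
    push_neg at hcon
    have hnpos : 0 < n := by nlinarith
    nlinarith [mul_pos hnpos hnpos, mul_lt_mul_of_pos_right hcon hnpos]
  refine ⟨A', hA'sub, hA'card, ?_⟩
  -- the difference set bound
  set S : Finset G := E.image (fun ab => ab.1 + ab.2) with hS
  set D : Finset G := A' - A' with hD
  have hwit : ∀ d : G, ∃ p : G × G, d ∈ D → (p.1 ∈ A' ∧ p.2 ∈ A' ∧ p.1 - p.2 = d) := by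
    intro d
    by_cases hd : d ∈ D
    · rw [hD, Finset.mem_sub] at hd
      obtain ⟨a, ha, b, hb, hab⟩ := hd
      exact ⟨(a, b), fun _ => ⟨ha, hb, hab⟩⟩
    · exact ⟨(0, 0), fun h => absurd h hd⟩
  choose w hw using hwit
  set C : G → Finset G := fun d => A.filter (fun b => ((w d).1, b) ∈ E ∧ ((w d).2, b) ∈ E) with hC
  -- each C d is large for d ∈ D
  have hCcard : ∀ d ∈ D, (1 - 2 * δ) * n ≤ ((C d).card : ℝ) := by
    intro d hd
    obtain ⟨h1, h2, _⟩ := hw d hd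
    have hCeq : C d = nbr (w d).1 ∩ nbr (w d).2 := by
      ext b
      simp [hC, hnbr, Finset.mem_inter, Finset.mem_filter, and_assoc]
      tauto
    have hu : ((nbr (w d).1 ∪ nbr (w d).2).card : ℝ) ≤ n := by
      have : nbr (w d).1 ∪ nbr (w d).2 ⊆ A :=
        Finset.union_subset (Finset.filter_subset _ _) (Finset.filter_subset _ _)
      exact_mod_cast Nat.cast_le.mpr (Finset.card_le_card this)
    have hie := Finset.card_union_add_card_inter (nbr (w d).1) (nbr (w d).2)
    have hie' : ((nbr (w d).1 ∪ nbr (w d).2).card : ℝ) + (((nbr (w d).1 ∩ nbr (w d).2)).card : ℝ)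
        = ((nbr (w d).1).card : ℝ) + ((nbr (w d).2).card : ℝ) := by exact_mod_cast hie
    have hd1 : (1 - δ) * n ≤ ((nbr (w d).1).card : ℝ) := (Finset.mem_filter.mp h1).2
    have hd2 : (1 - δ) * n ≤ ((nbr (w d).2).card : ℝ) := (Finset.mem_filter.mp h2).2
    rw [hCeq]
    push_cast
    linarith
  -- injection from sigma into S ×ˢ S
  have hinj : ((D.sigma C).card : ℝ) ≤ ((S ×ˢ S).card : ℝ) := by
    have : (D.sigma C).card ≤ (S ×ˢ S).card := by
      apply Finset.card_le_card_of_injOn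
        (fun p => ((w p.1).1 + p.2, (w p.1).2 + p.2))
      · intro p hp
        rw [Finset.mem_coe, Finset.mem_sigma] at hp
        obtain ⟨hpD, hpC⟩ := hp
        have hmem := (Finset.mem_filter.mp hpC).2
        rw [Finset.mem_coe, Finset.mem_product]
        constructor
        · exact Finset.mem_image.mpr ⟨((w p.1).1, p.2), hmem.1, rfl⟩
        · exact Finset.mem_image.mpr ⟨((w p.1).2, p.2), hmem.2, rfl⟩
      · intro p hp q hq heq
        rw [Finset.coe_sigma] at hp hq
        simp only [Set.mem_sigma_iff, Finset.mem_coe] at hp hq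
        have hdp := (hw p.1 hp.1).2.2
        have hdq := (hw q.1 hq.1).2.2
        have heq1 : (w p.1).1 + p.2 = (w q.1).1 + q.2 := congrArg Prod.fst heq
        have heq2 : (w p.1).2 + p.2 = (w q.1).2 + q.2 := congrArg Prod.snd heq
        have h1 : p.1 = q.1 := by
          rw [← hdp, ← hdq]
          have : ((w p.1).1 + p.2) - ((w p.1).2 + p.2) = ((w q.1).1 + q.2) - ((w q.1).2 + q.2) := by
            rw [heq1, heq2]
          simpa [add_sub_add_right_eq_sub] using this
        have h2 : p.2 = q.2 := by
          rw [h1] at heq1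
          exact add_left_cancel heq1
        exact Sigma.ext h1 (heq_of_eq h2)
    exact_mod_cast this
  have hsigma : ((D.sigma C).card : ℝ) = ∑ d ∈ D, ((C d).card : ℝ) := by
    rw [Finset.card_sigma]; push_cast; rfl
  have hSS : ((S ×ˢ S).card : ℝ) ≤ K ^ 2 * n ^ 2 := by
    rw [Finset.card_product]
    push_cast
    have hS0 : (0:ℝ) ≤ (S.card : ℝ) := by positivity
    nlinarith [hsum]
  have hlower : (1 - 2 * δ) * n * (D.card : ℝ) ≤ ∑ d ∈ D, ((C d).card : ℝ) := by
    calc (1 - 2 * δ) * n * (D.card : ℝ) = ∑ _d ∈ D, (1 - 2 * δ) * n := by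
          rw [Finset.sum_const, nsmul_eq_mul]; ring
      _ ≤ ∑ d ∈ D, ((C d).card : ℝ) := Finset.sum_le_sum hCcard
  have hmain : (1 - 2 * δ) * n * (D.card : ℝ) ≤ K ^ 2 * n ^ 2 := by
    calc (1 - 2 * δ) * n * (D.card : ℝ) ≤ ∑ d ∈ D, ((C d).card : ℝ) := hlower
      _ = ((D.sigma C).card : ℝ) := hsigma.symm
      _ ≤ ((S ×ˢ S).card : ℝ) := hinj
      _ ≤ K ^ 2 * n ^ 2 := hSS
  have hpos : (0:ℝ) < 1 - 2 * δ := by linarith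
  rcases eq_or_lt_of_le hn0 with h0 | h0
  · -- A is empty
    have hA0 : A.card = 0 := by
      have h0' := h0.symm
      rw [hn] at h0'
      exact_mod_cast h0'
    have hAe : A = ∅ := Finset.card_eq_zero.mp hA0
    have hA'e : A' = ∅ := Finset.subset_empty.mp (hAe ▸ hA'sub)
    have hDe : D = ∅ := by rw [hD, hA'e]; simp
    rw [hDe, ← h0]
    simp
  · rw [div_mul_eq_mul_div, le_div_iff₀ hpos]
    have hstep2 : n * ((D.card : ℝ) * (1 - 2 * δ)) ≤ n * (K ^ 2 * n) :=
      calc n * ((D.card : ℝ) * (1 - 2 * δ)) = (1 - 2 * δ) * n * (D.card : ℝ) := by ring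
        _ ≤ K ^ 2 * n ^ 2 := hmain
        _ = n * (K ^ 2 * n) := by ring
    exact le_of_mul_le_mul_left hstep2 h0
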